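/- arXiv:1706.09389 — 6 statements merged into one kernel-verified Lean document; each statement's English description precedes it below -/
import Mathlib

section
/- If m and n are both odd, then in any m × n Numbrix solution, every odd value occupies a cell (i, j) with i + j even, and every even value occupies a cell with i + j odd (indexing coordinates from 0). -/
/-- Two cells of an `m × n` board are adjacent if they agree in one coordinate
and differ by exactly 1 in the other. -/
def Adj {m n : ℕ} (a b : Fin m × Fin n) : Prop :=
  (a.1 = b.1 ∧ (a.2.val + 1 = b.2.val ∨ b.2.val + 1 = a.2.val)) ∨
  (a.2 = b.2 ∧ (a.1.val + 1 = b.1.val ∨ b.1.val + 1 = a.1.val))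

/-- A Numbrix solution on an `m × n` board: a bijection onto `{1, …, m*n}`
(equivalently, an injective map with values in `[1, m*n]`) such that cells
carrying consecutive values are adjacent. -/
def IsNumbrix {m n : ℕ} (f : Fin m × Fin n → ℕ) : Prop :=
  (∀ c, 1 ≤ f c ∧ f c ≤ m * n) ∧ Function.Injective f ∧
    ∀ c c', f c' = f c + 1 → Adj c c'

lemma cast_mod_two (x : ℕ) : (x : ZMod 2) = ((x % 2 : ℕ) : ZMod 2) :=
  (ZMod.natCast_mod x 2).symm

lemma cast_eq_one_iff (x : ℕ) : (x : ZMod 2) = 1 ↔ x % 2 = 1 := by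
  rw [cast_mod_two]
  rcases Nat.mod_two_eq_zero_or_one x with h | h <;> rw [h] <;> simp

lemma cast_add_two (x : ℕ) : ((x + 2 : ℕ) : ZMod 2) = (x : ZMod 2) := by
  push_cast
  rw [show (2 : ZMod 2) = 0 by decide, add_zero]

theorem odd_odd_parity (m n : ℕ) (hm : Odd m) (hn : Odd n)
    (f : Fin m × Fin n → ℕ) (hf : IsNumbrix f) :
    ∀ c : Fin m × Fin n,
      (Odd (f c) → Even (c.1.val + c.2.val)) ∧
      (Even (f c) → Odd (c.1.val + c.2.val)) := by
  obtain ⟨hbound, hinj, hadj⟩ := hf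
  obtain ⟨a, ha⟩ := hm
  obtain ⟨b, hb⟩ := hn
  set N := m * n with hNdef
  set g : Fin m × Fin n → ZMod 2 :=
    fun c => ((f c + c.1.val + c.2.val : ℕ) : ZMod 2) with hg
  -- step lemma
  have hstep : ∀ c c', f c' = f c + 1 → g c' = g c := by
    intro c c' h
    have hA := hadj c c' h
    have hv : (f c' + c'.1.val + c'.2.val = f c + c.1.val + c.2.val) ∨
        (f c' + c'.1.val + c'.2.val = f c + c.1.val + c.2.val + 2) := by
      rcases hA with ⟨h1, h2⟩ | ⟨h1, h2⟩ <;>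
        · have := congrArg Fin.val h1; omega
    simp only [hg]
    rcases hv with hv | hv
    · rw [hv]
    · rw [hv, cast_add_two]
  -- surjectivity
  have hcardIm : Finset.image f Finset.univ = Finset.Icc 1 N := by
    apply Finset.eq_of_subset_of_card_le
    · intro x hx
      simp only [Finset.mem_image, Finset.mem_univ, true_and] at hx
      obtain ⟨c, hc⟩ := hx
      rw [← hc, Finset.mem_Icc]
      exact hbound c
    · rw [Nat.card_Icc, Finset.card_image_of_injective _ hinj]
      simp [hNdef]
  have hsurj : ∀ k, 1 ≤ k → k ≤ N → ∃ c, f c = k := by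
    intro k h1 h2
    have : k ∈ Finset.image f Finset.univ := by
      rw [hcardIm, Finset.mem_Icc]; exact ⟨h1, h2⟩
    simpa using this
  have hN1 : 1 ≤ N := by
    have : N = 2*a*n + n := by rw [hNdef, ha]; ring
    omega
  obtain ⟨c0, hc0⟩ := hsurj 1 le_rfl hN1
  -- constancy
  have hconst : ∀ k c, f c = k → g c = g c0 := by
    intro k
    induction k using Nat.strong_induction_on with
    | _ k ih =>
      intro c hc
      rcases Nat.lt_or_ge k 2 with hk | hk
      · have hk1 : k = 1 := by have := (hbound c).1; omega
        have : c = c0 := hinj (by rw [hc, hc0, hk1])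
        rw [this]
      · obtain ⟨c', hc'⟩ := hsurj (k-1) (by omega)
          (by have := (hbound c).2; omega)
        have hcc : f c = f c' + 1 := by omega
        rw [hstep c' c hcc, ih (k-1) (by omega) c' hc']
  -- sum of g two ways
  have hsumConst : ∑ c, g c = (N : ZMod 2) * g c0 := by
    rw [Finset.sum_congr rfl (fun c _ => hconst (f c) c rfl), Finset.sum_const,
      nsmul_eq_mul]
    congr 1
    simp [hNdef]
  have hNodd : (N : ZMod 2) = 1 := by
    rw [cast_eq_one_iff, hNdef, ha, hb]
    have : (2*a+1)*(2*b+1) = 2*(2*a*b+a+b)+1 := by ring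
    omega
  -- sum of f over cells
  have hT1 : ∑ c, f c = (2*a*b+a+b+1) * N := by
    have h1 : ∑ c, f c = ∑ k ∈ Finset.Icc 1 N, k := by
      rw [← hcardIm, Finset.sum_image (fun x _ y _ h => hinj h)]
    have h2 : Finset.Icc 1 N = Finset.Ico 1 (N+1) := by
      rw [Finset.Ico_add_one_right_eq_Icc]
    have h3 : ∑ k ∈ Finset.range (N+1), k = ∑ k ∈ Finset.Ico 1 (N+1), k := by
      rw [Finset.range_eq_Ico, ← Finset.sum_Ico_consecutive _ (by omega : 0 ≤ 1) (by omega)]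
      simp
    have h5 : (N+1) * N = 2 * ((2*a*b+a+b+1) * N) := by
      rw [hNdef, ha, hb]; ring
    have h4 : ∑ k ∈ Finset.range (N+1), k = (2*a*b+a+b+1) * N := by
      rw [Finset.sum_range_id]
      simp only [Nat.add_sub_cancel]
      rw [h5, Nat.mul_div_cancel_left _ (by norm_num)]
    rw [h1, h2, ← h3, h4]
  -- sum of coordinates
  have hSm : ∑ i : Fin m, i.val = (2*a+1) * a := by
    rw [show (∑ i : Fin m, i.val) = ∑ i ∈ Finset.range m, i from
      Fin.sum_univ_eq_sum_range (fun i => i) m, Finset.sum_range_id, ha]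
    have h : 2*a+1-1 = 2*a := by omega
    rw [h, show (2*a+1) * (2*a) = 2 * ((2*a+1)*a) by ring,
      Nat.mul_div_cancel_left _ (by norm_num)]
  have hSn : ∑ j : Fin n, j.val = (2*b+1) * b := by
    rw [show (∑ j : Fin n, j.val) = ∑ j ∈ Finset.range n, j from
      Fin.sum_univ_eq_sum_range (fun j => j) n, Finset.sum_range_id, hb]
    have h : 2*b+1-1 = 2*b := by omega
    rw [h, show (2*b+1) * (2*b) = 2 * ((2*b+1)*b) by ring,
      Nat.mul_div_cancel_left _ (by norm_num)]
  have hT2 : ∑ c : Fin m × Fin n, (c.1.val + c.2.val)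
      = n * ((2*a+1)*a) + m * ((2*b+1)*b) := by
    rw [Fintype.sum_prod_type]
    have : ∀ i : Fin m, ∑ j : Fin n, (i.val + j.val)
        = n * i.val + (2*b+1)*b := by
      intro i
      rw [Finset.sum_add_distrib, Finset.sum_const, Finset.card_univ,
        Fintype.card_fin, smul_eq_mul, hSn]
    rw [Finset.sum_congr rfl (fun i _ => this i), Finset.sum_add_distrib,
      Finset.sum_const, Finset.card_univ, Fintype.card_fin, smul_eq_mul,
      ← Finset.mul_sum, hSm]
  -- total sum is odd
  have hsum2 : ∑ c, g c = 1 := by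
    have he : ∑ c, g c = ((∑ c, (f c + c.1.val + c.2.val) : ℕ) : ZMod 2) := by
      rw [Nat.cast_sum]
    have hsplit : ∑ c, (f c + c.1.val + c.2.val)
        = ∑ c, f c + ∑ c : Fin m × Fin n, (c.1.val + c.2.val) := by
      rw [← Finset.sum_add_distrib]
      exact Finset.sum_congr rfl (fun c _ => by ring)
    rw [he, hsplit, hT1, hT2, hNdef, ha, hb, cast_eq_one_iff]
    have : (2*a*b+a+b+1) * ((2*a+1)*(2*b+1)) + ((2*b+1) * ((2*a+1)*a) + (2*a+1) * ((2*b+1)*b))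
        = 2 * (4*a^2*b^2 + 6*a^2*b + 6*a*b^2 + 2*a^2 + 2*b^2 + 7*a*b + 2*a + 2*b) + 1 := by
      ring
    omega
  have hgc0 : g c0 = 1 := by
    rw [hsumConst, hNodd, one_mul] at hsum2
    exact hsum2
  have hall : ∀ c, ((f c + c.1.val + c.2.val : ℕ) : ZMod 2) = 1 := by
    intro c
    have := hconst (f c) c rfl
    rw [hgc0] at this
    exact this
  intro c
  have h := (cast_eq_one_iff _).mp (hall c)
  constructor
  · intro ho
    rw [Nat.odd_iff] at ho
    rw [Nat.even_iff]
    omega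
  · intro he
    rw [Nat.even_iff] at he
    rw [Nat.odd_iff]
    omega
end

section
/- The first column of the horizontal zig-zag solution determines it uniquely: if f is the zig-zag solution with f(i, 0) = i·n + 1 for i even and f(i, 0) = (i+1)·n for i odd (0-based), then any m × n Numbrix solution g satisfying g(i, 0) = f(i, 0) for all i equals f. -/
theorem zigzag_first_column_determines (m n : ℕ) (hn : 0 < n)
    (g : Fin m × Fin n → ℕ) (hg : IsNumbrix g)
    (hcol : ∀ i : Fin m, g (i, ⟨0, hn⟩) =
      if Even i.val then i.val * n + 1 else (i.val + 1) * n) :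
    g = fun c : Fin m × Fin n =>
      if Even c.1.val then c.1.val * n + c.2.val + 1
      else c.1.val * n + (n - c.2.val) := by
  obtain ⟨hbound, hinj, hadj⟩ := hg
  have hsurj : ∀ w, 1 ≤ w → w ≤ m * n → ∃ c, g c = w := by
    intro w h1 h2
    by_contra hcon
    push_neg at hcon
    have himg : Finset.univ.image g ⊆ (Finset.Icc 1 (m * n)).erase w := by
      intro x hx
      rw [Finset.mem_image] at hx
      obtain ⟨c, -, rfl⟩ := hx
      exact Finset.mem_erase.mpr ⟨hcon c, Finset.mem_Icc.mpr ⟨(hbound c).1, (hbound c).2⟩⟩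
    have h3 : (Finset.univ.image g).card = m * n := by
      rw [Finset.card_image_of_injective _ hinj, Finset.card_univ]
      simp
    have h5 := Finset.card_le_card himg
    rw [h3, Finset.card_erase_of_mem (Finset.mem_Icc.mpr ⟨h1, h2⟩), Nat.card_Icc] at h5
    omega
  have key : ∀ b : ℕ, ∀ hb : b < n, ∀ r : Fin m,
      g (r, ⟨b, hb⟩) = if Even r.val then r.val * n + b + 1 else r.val * n + (n - b) := by
    intro b
    induction b using Nat.strong_induction_on with
    | _ b ih =>
      intro hb r
      rcases b with _ | b
      · have h0 : (⟨0, hb⟩ : Fin n) = ⟨0, hn⟩ := rfl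
        rw [h0, hcol r]
        have hh : (r.val + 1) * n = r.val * n + n := by ring
        split_ifs <;> omega
      · have hb' : b < n := by omega
        have ihb := ih b (by omega) hb'
        by_cases heven : Even r.val
        · -- even row: the successor of the value at column b is forced to column b+1
          have hgb : g (r, ⟨b, hb'⟩) = r.val * n + b + 1 := by rw [ihb r, if_pos heven]
          have hle : r.val * n + b + 2 ≤ m * n := by
            have h1 : (r.val + 1) * n ≤ m * n := Nat.mul_le_mul_right n r.isLt
            have h2 : (r.val + 1) * n = r.val * n + n := by ring
            omega
          obtain ⟨c', hc'⟩ := hsurj (r.val * n + b + 2) (by omega) hle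
          obtain ⟨c1, c2⟩ := c'
          have hA : (r = c1 ∧ (b + 1 = c2.val ∨ c2.val + 1 = b)) ∨
              ((⟨b, hb'⟩ : Fin n) = c2 ∧ (r.val + 1 = c1.val ∨ c1.val + 1 = r.val)) :=
            hadj (r, ⟨b, hb'⟩) (c1, c2) (by rw [hc', hgb])
          rcases hA with ⟨h1, h2 | h2⟩ | ⟨h1, h2 | h2⟩
          · subst h1
            have hc2 : c2 = ⟨b + 1, hb⟩ := Fin.ext (show c2.val = b + 1 by omega)
            subst hc2
            rw [hc', if_pos heven]
            omega
          · subst h1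
            have hb1 : b - 1 < n := by omega
            have hc2 : c2 = ⟨b - 1, hb1⟩ := Fin.ext (show c2.val = b - 1 by omega)
            subst hc2
            rw [ih (b - 1) (by omega) hb1 _, if_pos heven] at hc'
            omega
          · subst h1
            have hpar : ¬ Even c1.val := by
              rw [← h2, Nat.even_add_one]
              simpa using heven
            rw [ihb c1, if_neg hpar] at hc'
            have hx : c1.val * n = r.val * n + n := by rw [← h2]; ring
            omega
          · subst h1
            have hpar : ¬ Even c1.val := by
              have h3 : Even (c1.val + 1) := by rw [h2]; exact heven
              rwa [Nat.even_add_one] at h3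
            rw [ihb c1, if_neg hpar] at hc'
            have hx : r.val * n = c1.val * n + n := by rw [← h2]; ring
            omega
        · -- odd row: the predecessor of the value at column b is forced to column b+1
          have hgb : g (r, ⟨b, hb'⟩) = r.val * n + (n - b) := by rw [ihb r, if_neg heven]
          have hub : r.val * n + (n - b) ≤ m * n := by
            have h1 := (hbound (r, ⟨b, hb'⟩)).2
            rw [hgb] at h1
            exact h1
          obtain ⟨c', hc'⟩ := hsurj (r.val * n + (n - b) - 1) (by omega) (by omega)
          obtain ⟨c1, c2⟩ := c'
          have hA : (c1 = r ∧ (c2.val + 1 = b ∨ b + 1 = c2.val)) ∨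
              (c2 = (⟨b, hb'⟩ : Fin n) ∧ (c1.val + 1 = r.val ∨ r.val + 1 = c1.val)) :=
            hadj (c1, c2) (r, ⟨b, hb'⟩) (by rw [hgb, hc']; omega)
          rcases hA with ⟨h1, h2 | h2⟩ | ⟨h1, h2 | h2⟩
          · subst h1
            have hb1 : b - 1 < n := by omega
            have hc2 : c2 = ⟨b - 1, hb1⟩ := Fin.ext (show c2.val = b - 1 by omega)
            subst hc2
            rw [ih (b - 1) (by omega) hb1 _, if_neg heven] at hc'
            omega
          · subst h1
            have hc2 : c2 = ⟨b + 1, hb⟩ := Fin.ext (show c2.val = b + 1 by omega)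
            subst hc2
            rw [hc', if_neg heven]
            omega
          · subst h1
            have hpar : Even c1.val := by
              have h3 := heven
              rw [← h2, Nat.even_add_one] at h3
              simpa using h3
            rw [ihb c1, if_pos hpar] at hc'
            have hx : r.val * n = c1.val * n + n := by rw [← h2]; ring
            omega
          · subst h1
            have hpar : Even c1.val := by
              rw [← h2, Nat.even_add_one]
              exact heven
            rw [ihb c1, if_pos hpar] at hc'
            have hx : c1.val * n = r.val * n + n := by rw [← h2]; ring
            omega
  funext c
  obtain ⟨r, j⟩ := c
  exact key j.val j.isLt r
end

section
/- For n ≥ 2, any single clue (c, v) with v ≠ (n+1)/2 or c not the middle cell determines a unique 1 × n Numbrix solution; moreover, if n is odd, the clue placing value (n+1)/2 at the middle cell is consistent with exactly two distinct solutions. -/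
/-- Adjacency on a `1 × n` board (cells `Fin n`): differing by exactly 1. -/
def Adj1 {n : ℕ} (a b : Fin n) : Prop := a.val + 1 = b.val ∨ b.val + 1 = a.val

/-- A `1 × n` Numbrix solution: a bijection onto `{1, …, n}` with consecutive
values on adjacent cells. -/
def IsNumbrix1 {n : ℕ} (f : Fin n → ℕ) : Prop :=
  (∀ c, 1 ≤ f c ∧ f c ≤ n) ∧ Function.Injective f ∧
    ∀ c c', f c' = f c + 1 → Adj1 c c'

lemma numbrix_classify {n : ℕ} (hn : 2 ≤ n) (f : Fin n → ℕ) (hf : IsNumbrix1 f) :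
    (∀ j : Fin n, f j = j.val + 1) ∨ (∀ j : Fin n, f j = n - j.val) := by
  obtain ⟨hbd, hinj, hadj⟩ := hf
  set F : Fin n → Fin n := fun c => ⟨f c - 1, by have := hbd c; omega⟩ with hF
  have hFinj : Function.Injective F := by
    intro a b hab
    apply hinj
    have h1 := (hbd a).1; have h2 := (hbd b).1
    have := congrArg Fin.val hab
    simp [hF] at this
    omega
  have hFsurj : Function.Surjective F := Finite.surjective_of_injective hFinj
  have hne : Nonempty (Fin n) := ⟨⟨0, by omega⟩⟩
  set d : Fin n → Fin n := Function.invFun F with hd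
  have hFd : ∀ m : Fin n, F (d m) = m := Function.rightInverse_invFun hFsurj
  have hfd : ∀ m : Fin n, f (d m) = m.val + 1 := by
    intro m
    have := congrArg Fin.val (hFd m)
    simp [hF] at this
    have := (hbd (d m)).1
    omega
  have hdinj : Function.Injective d := by
    intro a b hab
    have : f (d a) = f (d b) := by rw [hab]
    rw [hfd, hfd] at this
    exact Fin.ext (by omega)
  -- ℕ-valued position of value k+1
  set e : ℕ → ℕ := fun k => if h : k < n then (d ⟨k, h⟩).val else 0 with he
  have helt : ∀ k, k < n → e k < n := by
    intro k hk
    simp only [he, dif_pos hk]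
    exact (d ⟨k, hk⟩).isLt
  have estep : ∀ k, k + 1 < n → e (k + 1) = e k + 1 ∨ e k = e (k + 1) + 1 := by
    intro k hk
    have h1 : f (d ⟨k + 1, hk⟩) = f (d ⟨k, by omega⟩) + 1 := by rw [hfd, hfd]
    have h2 := hadj _ _ h1
    unfold Adj1 at h2
    simp only [he, dif_pos hk, dif_pos (show k < n by omega)]
    exact h2.imp (fun h => h.symm) (fun h => h.symm)
  have einj : ∀ k l, k < n → l < n → e k = e l → k = l := by
    intro k l hk hl h
    simp only [he, dif_pos hk, dif_pos hl] at h
    have := hdinj (Fin.ext h : d ⟨k, hk⟩ = d ⟨l, hl⟩)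
    exact congrArg Fin.val this
  have hval : ∀ j : Fin n, ∀ k, (hk : k < n) → e k = j.val → f j = k + 1 := by
    intro j k hk hek
    have : d ⟨k, hk⟩ = j := by
      apply Fin.ext
      simpa [he, dif_pos hk] using hek
    have := hfd ⟨k, hk⟩
    rw [‹d ⟨k, hk⟩ = j›] at this
    simpa using this
  rcases estep 0 (by omega) with h1 | h1 <;> rw [show 0+1=1 by omega] at h1
  · left
    have key : ∀ k, k < n → e k = e 0 + k := by
      intro k
      induction k using Nat.strong_induction_on with
      | _ k ih =>
        intro hk
        match k with
        | 0 => simp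
        | 1 => omega
        | (m+2) =>
          have hm1 := ih (m+1) (by omega) (by omega)
          have hm := ih m (by omega) (by omega)
          rcases estep (m+1) hk with h | h <;> rw [show m+1+1=m+2 by omega] at h
          · omega
          · exfalso
            have := einj (m+2) m (by omega) (by omega) (by omega)
            omega
    have h0 : e 0 = 0 := by
      have := key (n-1) (by omega)
      have := helt (n-1) (by omega)
      omega
    intro j
    have hj := j.isLt
    exact hval j j.val hj (by have := key j.val hj; omega)
  · right
    have key : ∀ k, k < n → e k + k = e 0 := by
      intro k
      induction k using Nat.strong_induction_on with
      | _ k ih =>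
        intro hk
        match k with
        | 0 => simp
        | 1 => omega
        | (m+2) =>
          have hm1 := ih (m+1) (by omega) (by omega)
          have hm := ih m (by omega) (by omega)
          rcases estep (m+1) hk with h | h <;> rw [show m+1+1=m+2 by omega] at h
          · exfalso
            have := einj (m+2) m (by omega) (by omega) (by omega)
            omega
          · omega
    have h0 : e 0 = n - 1 := by
      have := key (n-1) (by omega)
      have := helt 0 (by omega)
      omega
    intro j
    have hj := j.isLt
    have hk : n - 1 - j.val < n := by omega
    have := key (n - 1 - j.val) hk
    have := hval j (n - 1 - j.val) hk (by omega)
    omega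

lemma numbrix_inc {n : ℕ} : IsNumbrix1 (fun j : Fin n => j.val + 1) := by
  refine ⟨?_, ?_, ?_⟩
  · intro c
    have := c.isLt
    constructor <;> simp <;> omega
  · intro a b hab
    have : a.val + 1 = b.val + 1 := hab
    exact Fin.ext (by omega)
  · intro c c' h
    have : c'.val + 1 = c.val + 1 + 1 := h
    exact Or.inl (by omega)

lemma numbrix_dec {n : ℕ} : IsNumbrix1 (fun j : Fin n => n - j.val) := by
  refine ⟨?_, ?_, ?_⟩
  · intro c
    have := c.isLt
    constructor <;> simp <;> omega
  · intro a b hab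
    have ha := a.isLt; have hb := b.isLt
    have : n - a.val = n - b.val := hab
    exact Fin.ext (by omega)
  · intro c c' h
    have hc := c.isLt; have hc' := c'.isLt
    have : n - c'.val = n - c.val + 1 := h
    exact Or.inr (by omega)

theorem one_by_n_single_clue (n : ℕ) (hn : 2 ≤ n) :
    (∀ (c : Fin n) (v : ℕ),
      (∃ f : Fin n → ℕ, IsNumbrix1 f ∧ f c = v) →
      (v ≠ (n + 1) / 2 ∨ c.val ≠ (n - 1) / 2) →
      ∃! f : Fin n → ℕ, IsNumbrix1 f ∧ f c = v) ∧
    (Odd n →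
      ∃ f g : Fin n → ℕ, f ≠ g ∧
        IsNumbrix1 f ∧ IsNumbrix1 g ∧
        f ⟨(n - 1) / 2, by omega⟩ = (n + 1) / 2 ∧
        g ⟨(n - 1) / 2, by omega⟩ = (n + 1) / 2 ∧
        ∀ h : Fin n → ℕ, IsNumbrix1 h →
          h ⟨(n - 1) / 2, by omega⟩ = (n + 1) / 2 → h = f ∨ h = g) := by
  constructor
  · intro c v ⟨f, hf, hfc⟩ hside
    refine ⟨f, ⟨hf, hfc⟩, ?_⟩
    intro g ⟨hg, hgc⟩
    have hc := c.isLt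
    rcases numbrix_classify hn f hf with hf' | hf' <;>
      rcases numbrix_classify hn g hg with hg' | hg'
    · funext j; rw [hf' j, hg' j]
    · exfalso
      have h1 := hf' c; have h2 := hg' c
      rw [hfc] at h1; rw [hgc] at h2
      rcases hside with h | h <;> apply h <;> omega
    · exfalso
      have h1 := hf' c; have h2 := hg' c
      rw [hfc] at h1; rw [hgc] at h2
      rcases hside with h | h <;> apply h <;> omega
    · funext j; rw [hf' j, hg' j]
  · intro hodd
    obtain ⟨m, hm⟩ := hodd
    refine ⟨fun j => j.val + 1, fun j => n - j.val, ?_, numbrix_inc, numbrix_dec, ?_, ?_, ?_⟩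
    · intro heq
      have h0 := congrFun heq ⟨0, by omega⟩
      simp at h0
      omega
    · show (n - 1) / 2 + 1 = (n + 1) / 2
      omega
    · show n - (n - 1) / 2 = (n + 1) / 2
      omega
    · intro h hh hmid
      rcases numbrix_classify hn h hh with h' | h'
      · left; funext j; rw [h' j]
      · right; funext j; rw [h' j]
end

section
/- For n ≥ 2, if n is even then every single consistent clue determines a unique 1 × n Numbrix solution (so the maximum number of clues not defining a puzzle is 0 in the sense that any 1 consistent clue suffices). -/
lemma num_surj {n : ℕ} {f : Fin n → ℕ} (h : IsNumbrix1 f) {k : ℕ}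
    (h1 : 1 ≤ k) (h2 : k ≤ n) : ∃ i, f i = k := by
  obtain ⟨hb, hinj, _⟩ := h
  have himg : (Finset.univ.image f) = Finset.Icc 1 n := by
    apply Finset.eq_of_subset_of_card_le
    · intro x hx
      simp only [Finset.mem_image, Finset.mem_univ, true_and] at hx
      obtain ⟨i, hi⟩ := hx
      simp only [Finset.mem_Icc, ← hi]
      exact hb i
    · rw [Finset.card_image_of_injective _ hinj]
      simp
  have hk : k ∈ Finset.univ.image f := by
    rw [himg]; simp only [Finset.mem_Icc]; exact ⟨h1, h2⟩
  simpa using hk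

lemma num_cases {n : ℕ} (hn : 2 ≤ n) {f : Fin n → ℕ} (h : IsNumbrix1 f) :
    (∀ i : Fin n, f i = i.val + 1) ∨ (∀ i : Fin n, f i = n - i.val) := by
  have hb := h.1
  have hinj := h.2.1
  have hadj := h.2.2
  have h0n : 0 < n := by omega
  set z : Fin n := ⟨0, h0n⟩ with hz
  -- first: f z = 1 ∨ f z = n
  have hend : f z = 1 ∨ f z = n := by
    by_contra hcon
    push_neg at hcon
    have hb0 := hb z
    have h1 : 1 < f z := by omega
    have h2 : f z < n := by omega
    obtain ⟨x, hx⟩ := num_surj h (k := f z - 1) (by omega) (by omega)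
    obtain ⟨y, hy⟩ := num_surj h (k := f z + 1) (by omega) (by omega)
    have hax : Adj1 x z := hadj x z (by omega)
    have hay : Adj1 z y := hadj z y (by omega)
    have hx1 : x.val = 1 := by
      rcases hax with h' | h' <;> simp [hz] at h' <;> omega
    have hy1 : y.val = 1 := by
      rcases hay with h' | h' <;> simp [hz] at h' <;> omega
    have : x = y := Fin.ext (by omega)
    rw [this, hy] at hx
    omega
  rcases hend with hfz | hfz
  · left
    have key : ∀ m : ℕ, (hm : m < n) → f ⟨m, hm⟩ = m + 1 := by
      intro m
      induction m using Nat.strong_induction_on with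
      | _ m ih =>
        intro hm
        rcases Nat.eq_zero_or_pos m with hm0 | hm0
        · subst hm0; exact hfz
        · obtain ⟨k, rfl⟩ : ∃ k, m = k + 1 := ⟨m - 1, by omega⟩
          have hk : k < n := by omega
          have hfk : f ⟨k, hk⟩ = k + 1 := ih k (by omega) hk
          obtain ⟨y, hy⟩ := num_surj h (k := k + 2) (by omega) (by omega)
          have hay : Adj1 ⟨k, hk⟩ y := hadj _ y (by omega)
          rcases hay with h' | h'
          · simp only at h'
            have : y = ⟨k + 1, hm⟩ := Fin.ext h'.symm
            rw [← this, hy]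
          · simp only at h'
            have hyk : y.val = k - 1 := by omega
            have hkpos : 1 ≤ k := by omega
            have hy' : f ⟨k - 1, by omega⟩ = (k - 1) + 1 := ih (k - 1) (by omega) (by omega)
            have : y = ⟨k - 1, by omega⟩ := Fin.ext hyk
            rw [this, hy'] at hy
            omega
    intro i
    have := key i.val i.isLt
    simpa using this
  · right
    have key : ∀ m : ℕ, (hm : m < n) → f ⟨m, hm⟩ = n - m := by
      intro m
      induction m using Nat.strong_induction_on with
      | _ m ih =>
        intro hm
        rcases Nat.eq_zero_or_pos m with hm0 | hm0
        · subst hm0; simpa using hfz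
        · obtain ⟨k, rfl⟩ : ∃ k, m = k + 1 := ⟨m - 1, by omega⟩
          have hk : k < n := by omega
          have hfk : f ⟨k, hk⟩ = n - k := ih k (by omega) hk
          obtain ⟨x, hx⟩ := num_surj h (k := n - k - 1) (by omega) (by omega)
          have hax : Adj1 x ⟨k, hk⟩ := hadj x _ (by omega)
          rcases hax with h' | h'
          · simp only at h'
            have hxk : x.val = k - 1 := by omega
            have hkpos : 1 ≤ k := by omega
            have hx' : f ⟨k - 1, by omega⟩ = n - (k - 1) := ih (k - 1) (by omega) (by omega)
            have : x = ⟨k - 1, by omega⟩ := Fin.ext hxk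
            rw [this, hx'] at hx
            omega
          · simp only at h'
            have : x = ⟨k + 1, hm⟩ := Fin.ext h'.symm
            rw [← this, hx]
            omega
    intro i
    have := key i.val i.isLt
    simpa using this

lemma sol1 {n : ℕ} : IsNumbrix1 (fun i : Fin n => i.val + 1) := by
  refine ⟨fun c => ⟨by simp only; omega, by simp only; have := c.isLt; omega⟩, ?_, ?_⟩
  · intro a b hab
    simp only at hab
    exact Fin.ext (by omega)
  · intro a b hab
    simp only at hab
    left; omega

lemma sol2 {n : ℕ} : IsNumbrix1 (fun i : Fin n => n - i.val) := by
  refine ⟨fun c => ⟨by simp only; have := c.isLt; omega, by simp only; omega⟩, ?_, ?_⟩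
  · intro a b hab
    simp only at hab
    have := a.isLt; have := b.isLt
    exact Fin.ext (by omega)
  · intro a b hab
    simp only at hab
    have := a.isLt; have := b.isLt
    right; omega

theorem one_by_n_even_single_clue (n : ℕ) (hn : 2 ≤ n) (hev : Even n)
    (c : Fin n) (v : ℕ)
    (hclue : ∃ f : Fin n → ℕ, IsNumbrix1 f ∧ f c = v) :
    ∃! f : Fin n → ℕ, IsNumbrix1 f ∧ f c = v := by
  obtain ⟨f, hf, hfc⟩ := hclue
  obtain ⟨r, hr⟩ := hev
  have hnot : ¬ (c.val + 1 = n - c.val) := by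
    have := c.isLt; omega
  rcases num_cases hn hf with hcase | hcase
  · refine ⟨fun i : Fin n => i.val + 1, ⟨sol1, by rw [← hfc, hcase c]⟩, ?_⟩
    rintro g ⟨hg, hgc⟩
    rcases num_cases hn hg with hcg | hcg
    · funext i; rw [hcg i]
    · exfalso
      apply hnot
      rw [← hcg c, hgc, ← hfc, hcase c]
  · refine ⟨fun i : Fin n => n - i.val, ⟨sol2, by rw [← hfc, hcase c]⟩, ?_⟩
    rintro g ⟨hg, hgc⟩
    rcases num_cases hn hg with hcg | hcg
    · exfalso
      apply hnot
      rw [← hcg c, hgc, ← hfc, hcase c]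
    · funext i; rw [hcg i]
end

section
/- For n ≥ 2, the two clues placing value 1 at cell (0, 0) and value 2n at cell (1, 0) define a unique 2 × n Numbrix solution; hence the minimum number of clues needed to define a 2 × n puzzle is at most 2, and combined with the existence of a circular solution it is exactly 2. -/
lemma adj_symm {m n : ℕ} {a b : Fin m × Fin n} (h : Adj a b) : Adj b a := by
  unfold Adj at *; tauto

lemma numbrix_surj {m n : ℕ} {f : Fin m × Fin n → ℕ} (hf : IsNumbrix f) :
    ∀ t, 1 ≤ t → t ≤ m * n → ∃ c, f c = t := by
  obtain ⟨hr, hi, -⟩ := hf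
  intro t h1 h2
  have himg : Finset.image f Finset.univ = Finset.Icc 1 (m*n) := by
    apply Finset.eq_of_subset_of_card_le
    · intro x hx
      simp only [Finset.mem_image] at hx
      obtain ⟨c, -, rfl⟩ := hx
      simpa [Finset.mem_Icc] using hr c
    · rw [Finset.card_image_of_injective _ hi]
      simp [Nat.card_Icc]
  have : t ∈ Finset.image f Finset.univ := by
    rw [himg]; simp [Finset.mem_Icc]; omega
  simpa using this

lemma numbrix_rev {m n : ℕ} {f : Fin m × Fin n → ℕ} (hf : IsNumbrix f) :
    IsNumbrix (fun c => m * n + 1 - f c) := by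
  obtain ⟨hr, hi, ha⟩ := hf
  refine ⟨fun c => by have := hr c; simp only; omega, ?_, ?_⟩
  · intro a b h
    simp only at h
    have := hr a; have := hr b
    exact hi (by omega)
  · intro c c' h
    simp only at h
    have := hr c; have := hr c'
    exact adj_symm (ha c' c (by omega))

/-- Position of a cell along the boundary cycle of the `2 × n` board. -/
def cpos {n : ℕ} (c : Fin 2 × Fin n) : ℕ :=
  if c.1.val = 0 then c.2.val else 2 * n - 1 - c.2.val

lemma cpos_lt {n : ℕ} (c : Fin 2 × Fin n) : cpos c < 2 * n := by
  unfold cpos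
  have := c.2.isLt
  split <;> omega

lemma cpos_inj {n : ℕ} {a b : Fin 2 × Fin n} (h : cpos a = cpos b) : a = b := by
  obtain ⟨i, j⟩ := a; obtain ⟨i', j'⟩ := b
  have hi := i.isLt; have hi' := i'.isLt
  have hj := j.isLt; have hj' := j'.isLt
  simp only [cpos] at h
  have : i.val = i'.val ∧ j.val = j'.val := by
    split_ifs at h <;> omega
  simp only [Prod.mk.injEq, Fin.ext_iff]
  omega

lemma cpos_adj {n : ℕ} {a b : Fin 2 × Fin n}
    (h : cpos b = cpos a + 1 ∨ (cpos a = 2 * n - 1 ∧ cpos b = 0)) : Adj a b := by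
  obtain ⟨i, j⟩ := a; obtain ⟨i', j'⟩ := b
  have hi := i.isLt; have hi' := i'.isLt
  have hj := j.isLt; have hj' := j'.isLt
  simp only [cpos] at h
  unfold Adj
  simp only [Fin.ext_iff]
  split_ifs at h <;> omega

/-- Rotated circular solution. -/
def crot {n : ℕ} (K : ℕ) (c : Fin 2 × Fin n) : ℕ :=
  if cpos c + K < 2 * n then cpos c + K + 1 else cpos c + K + 1 - 2 * n

lemma crot_numbrix {n : ℕ} (K : ℕ) (hK : K < 2 * n) : IsNumbrix (crot (n := n) K) := by
  refine ⟨fun c => ?_, fun a b h => ?_, fun c c' h => ?_⟩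
  · have := cpos_lt c
    unfold crot; split <;> simp <;> omega
  · have := cpos_lt a; have := cpos_lt b
    unfold crot at h
    apply cpos_inj
    split at h <;> split at h <;> omega
  · have := cpos_lt c; have := cpos_lt c'
    apply cpos_adj
    unfold crot at h
    split at h <;> split at h <;> omega

/-- The snake solution on the `2 × n` board. -/
def snake {n : ℕ} (c : Fin 2 × Fin n) : ℕ :=
  if c.1.val = 0 then c.2.val + 1 else 2 * n - c.2.val

lemma snake_numbrix {n : ℕ} : IsNumbrix (snake (n := n)) := by
  refine ⟨fun c => ?_, fun a b h => ?_, fun c c' h => ?_⟩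
  · have := c.2.isLt
    simp only [snake]
    split_ifs <;> omega
  · obtain ⟨i, j⟩ := a; obtain ⟨i', j'⟩ := b
    have hi := i.isLt; have hi' := i'.isLt
    have hj := j.isLt; have hj' := j'.isLt
    simp only [snake] at h
    simp only [Prod.mk.injEq, Fin.ext_iff]
    split_ifs at h <;> omega
  · obtain ⟨i, j⟩ := c; obtain ⟨i', j'⟩ := c'
    have hi := i.isLt; have hi' := i'.isLt
    have hj := j.isLt; have hj' := j'.isLt
    simp only [snake] at h
    unfold Adj
    simp only [Fin.ext_iff]
    split_ifs at h <;> omega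

lemma snake_vals {n : ℕ} (hn : 2 ≤ n) (f : Fin 2 × Fin n → ℕ) (hf : IsNumbrix f)
    (h1 : f (0, ⟨0, Nat.lt_of_lt_of_le (by decide) hn⟩) = 1) (h2 : f (1, ⟨0, Nat.lt_of_lt_of_le (by decide) hn⟩) = 2 * n) :
    ∀ j, ∀ hj : j < n, f (0, ⟨j, hj⟩) = j + 1 ∧ f (1, ⟨j, hj⟩) = 2 * n - j := by
  have hsurj := numbrix_surj hf
  obtain ⟨hr, hi, ha⟩ := hf
  intro j
  induction j using Nat.strong_induction_on with
  | _ j ih =>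
    intro hj
    rcases j with _ | k
    · exact ⟨h1, by simpa using h2⟩
    · have ihk := ih k (by omega) (by omega)
      constructor
      · -- the cell with value k+2 is (0, k+1)
        obtain ⟨c', hc'⟩ := hsurj (k + 2) (by omega) (by omega)
        have hadj := ha (0, ⟨k, by omega⟩) c' (by rw [ihk.1, hc'])
        obtain ⟨i', j'⟩ := c'
        have hi' := i'.isLt; have hj' := j'.isLt
        have hcase : (i'.val = 0 ∧ (j'.val = k + 1 ∨ j'.val + 1 = k)) ∨
            (i'.val = 1 ∧ j'.val = k) := by
          unfold Adj at hadj
          simp only [Fin.ext_iff] at hadj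
          simp only [Fin.val_zero] at hadj
          omega
        rcases hcase with ⟨e1, e2 | e2⟩ | ⟨e1, e2⟩
        · have : (i', j') = ((0 : Fin 2), (⟨k + 1, by omega⟩ : Fin n)) := by
            simp only [Prod.mk.injEq, Fin.ext_iff, Fin.val_zero, Fin.val_one, and_true, true_and]; omega
          rw [this] at hc'; exact hc'
        · -- c' = (0, k-1), value k, contradiction
          exfalso
          have hk1 : j'.val < n := by omega
          have := (ih j'.val (by omega) hk1).1
          have heq : (i', j') = ((0 : Fin 2), (⟨j'.val, hk1⟩ : Fin n)) := by
            simp only [Prod.mk.injEq, Fin.ext_iff, Fin.val_zero, Fin.val_one, and_true, true_and]; omega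
          rw [heq] at hc'
          omega
        · -- c' = (1, k), value 2n - k, contradiction
          exfalso
          have heq : (i', j') = ((1 : Fin 2), (⟨k, by omega⟩ : Fin n)) := by
            simp only [Prod.mk.injEq, Fin.ext_iff, Fin.val_zero, Fin.val_one, and_true, true_and]; omega
          rw [heq] at hc'
          rw [ihk.2] at hc'
          omega
      · -- the cell with value 2n - (k+1) is (1, k+1)
        obtain ⟨d, hd⟩ := hsurj (2 * n - (k + 1)) (by omega) (by omega)
        have hadj := ha d (1, ⟨k, by omega⟩) (by rw [ihk.2, hd]; omega)
        obtain ⟨i', j'⟩ := d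
        have hi' := i'.isLt; have hj' := j'.isLt
        have hcase : (i'.val = 1 ∧ (j'.val = k + 1 ∨ j'.val + 1 = k)) ∨
            (i'.val = 0 ∧ j'.val = k) := by
          unfold Adj at hadj
          simp only [Fin.ext_iff] at hadj
          simp only [Fin.val_one] at hadj
          omega
        rcases hcase with ⟨e1, e2 | e2⟩ | ⟨e1, e2⟩
        · have : (i', j') = ((1 : Fin 2), (⟨k + 1, by omega⟩ : Fin n)) := by
            simp only [Prod.mk.injEq, Fin.ext_iff, Fin.val_zero, Fin.val_one, and_true, true_and]; omega
          rw [this] at hd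
          rw [hd]
        · exfalso
          have hk1 : j'.val < n := by omega
          have := (ih j'.val (by omega) hk1).2
          have heq : (i', j') = ((1 : Fin 2), (⟨j'.val, hk1⟩ : Fin n)) := by
            simp only [Prod.mk.injEq, Fin.ext_iff, Fin.val_zero, Fin.val_one, and_true, true_and]; omega
          rw [heq] at hd
          omega
        · exfalso
          have heq : (i', j') = ((0 : Fin 2), (⟨k, by omega⟩ : Fin n)) := by
            simp only [Prod.mk.injEq, Fin.ext_iff, Fin.val_zero, Fin.val_one, and_true, true_and]; omega
          rw [heq] at hd
          rw [ihk.1] at hd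
          omega

lemma crot_choose {n : ℕ} (c : Fin 2 × Fin n) (v : ℕ) (hv1 : 1 ≤ v) (hv2 : v ≤ 2 * n) :
    ∃ K, K < 2 * n ∧ (cpos c + K = v - 1 ∨ cpos c + K = 2 * n + (v - 1)) ∧ crot K c = v := by
  have hp := cpos_lt c
  refine ⟨if cpos c + 1 ≤ v then v - 1 - cpos c else 2 * n + v - 1 - cpos c, ?_, ?_, ?_⟩
  · split_ifs <;> omega
  · split_ifs <;> omega
  · unfold crot
    split_ifs <;> omega

theorem two_by_n_min_clues (n : ℕ) (hn : 2 ≤ n) :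
    (∃! f : Fin 2 × Fin n → ℕ, IsNumbrix f ∧
      f (0, ⟨0, by omega⟩) = 1 ∧ f (1, ⟨0, by omega⟩) = 2 * n) ∧
    (∀ (c : Fin 2 × Fin n) (v : ℕ),
      (∃ f : Fin 2 × Fin n → ℕ, IsNumbrix f ∧ f c = v) →
      ∃ g h : Fin 2 × Fin n → ℕ,
        IsNumbrix g ∧ IsNumbrix h ∧ g c = v ∧ h c = v ∧ g ≠ h) := by
  constructor
  · refine ⟨snake, ⟨snake_numbrix, by simp [snake], by simp [snake]⟩, ?_⟩
    rintro f ⟨hf, hf1, hf2⟩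
    funext d
    obtain ⟨i, j⟩ := d
    have hv := snake_vals hn f hf hf1 hf2 j.val j.isLt
    have hi := i.isLt
    have : i = 0 ∨ i = 1 := by
      have : i.val = 0 ∨ i.val = 1 := by omega
      rcases this with h | h
      · left; exact Fin.ext h
      · right; exact Fin.ext h
    rcases this with rfl | rfl
    · have := hv.1
      rw [Fin.eta] at this
      rw [this]
      simp [snake]
    · have := hv.2
      rw [Fin.eta] at this
      rw [this]
      simp [snake]
  · rintro c v ⟨f, hf, hfc⟩
    have hv := hf.1 c
    rw [hfc] at hv
    have hp := cpos_lt c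
    obtain ⟨K, hK1, hK2, hK3⟩ := crot_choose c v hv.1 hv.2
    obtain ⟨K', hK1', hK2', hK3'⟩ := crot_choose c (2 * n + 1 - v) (by omega) (by omega)
    refine ⟨crot K, fun d => 2 * n + 1 - crot K' d,
      crot_numbrix K hK1, numbrix_rev (crot_numbrix K' hK1'), hK3, by simp only; rw [hK3']; omega, ?_⟩
    intro heq
    have e0 : cpos ((0 : Fin 2), (⟨0, by omega⟩ : Fin n)) = 0 := by simp [cpos]
    have e1 : cpos ((0 : Fin 2), (⟨1, by omega⟩ : Fin n)) = 1 := by simp [cpos]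
    have q0 := congrFun heq ((0 : Fin 2), (⟨0, by omega⟩ : Fin n))
    have q1 := congrFun heq ((0 : Fin 2), (⟨1, by omega⟩ : Fin n))
    simp only [crot, e0, e1] at q0 q1
    split_ifs at q0 q1 <;> omega
end

section
/- On a 3 × 3 board, for every single consistent clue there exist at least two distinct Numbrix solutions consistent with it; i.e., no single clue defines a 3 × 3 Numbrix puzzle. -/
instance {m n : ℕ} (a b : Fin m × Fin n) : Decidable (Adj a b) := by
  unfold Adj; infer_instance

lemma reflect_trick (c : Fin 3 × Fin 3) (v : ℕ)
    (f : Fin 3 × Fin 3 → ℕ) (hf : IsNumbrix f) (hfc : f c = v)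
    (σ : Fin 3 × Fin 3 → Fin 3 × Fin 3)
    (hinv : ∀ x, σ (σ x) = x)
    (hadj : ∀ a b, Adj a b → Adj (σ a) (σ b))
    (hfix : σ c = c) (hne : ∃ x, σ x ≠ x) :
    ∃ f g : Fin 3 × Fin 3 → ℕ,
      IsNumbrix f ∧ IsNumbrix g ∧ f c = v ∧ g c = v ∧ f ≠ g := by
  have hσinj : Function.Injective σ :=
    Function.LeftInverse.injective hinv
  refine ⟨f, f ∘ σ, hf, ⟨fun x => hf.1 (σ x), hf.2.1.comp hσinj, ?_⟩,
    hfc, by simp [Function.comp, hfix, hfc], ?_⟩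
  · intro a b h
    have h2 := hf.2.2 (σ a) (σ b) h
    have := hadj _ _ h2
    rwa [hinv, hinv] at this
  · intro heq
    obtain ⟨x, hx⟩ := hne
    exact hx (hf.2.1 (congrFun heq x).symm)

theorem three_by_three_one_clue (c : Fin 3 × Fin 3) (v : ℕ)
    (hclue : ∃ f : Fin 3 × Fin 3 → ℕ, IsNumbrix f ∧ f c = v) :
    ∃ f g : Fin 3 × Fin 3 → ℕ,
      IsNumbrix f ∧ IsNumbrix g ∧ f c = v ∧ g c = v ∧ f ≠ g := by
  obtain ⟨f, hf, hfc⟩ := hclue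
  -- symmetries
  let τ : Fin 3 × Fin 3 → Fin 3 × Fin 3 := fun p => (p.2, p.1)            -- transpose
  let α : Fin 3 × Fin 3 → Fin 3 × Fin 3 := fun p => (2 - p.2, 2 - p.1)    -- anti-transpose
  let ρ : Fin 3 × Fin 3 → Fin 3 × Fin 3 := fun p => (2 - p.1, p.2)        -- row flip
  let κ : Fin 3 × Fin 3 → Fin 3 × Fin 3 := fun p => (p.1, 2 - p.2)        -- column flip
  fin_cases c
  · exact reflect_trick _ v f hf hfc τ (by decide) (by decide) (by decide) (by decide)
  · exact reflect_trick _ v f hf hfc κ (by decide) (by decide) (by decide) (by decide)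
  · exact reflect_trick _ v f hf hfc α (by decide) (by decide) (by decide) (by decide)
  · exact reflect_trick _ v f hf hfc ρ (by decide) (by decide) (by decide) (by decide)
  · exact reflect_trick _ v f hf hfc ρ (by decide) (by decide) (by decide) (by decide)
  · exact reflect_trick _ v f hf hfc ρ (by decide) (by decide) (by decide) (by decide)
  · exact reflect_trick _ v f hf hfc α (by decide) (by decide) (by decide) (by decide)
  · exact reflect_trick _ v f hf hfc κ (by decide) (by decide) (by decide) (by decide)
  · exact reflect_trick _ v f hf hfc τ (by decide) (by decide) (by decide) (by decide)
end
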